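/- Let n ≥ 5 and let y = (y_1,…,y_n) ∈ H_n be such that y_{j+1} − y_j ≥ 1 for all j = 1, …, n−2 and y_{n−1} = y_n. Then |y|_1 ≥ (n−3)/5. -/

import Mathlib

/-- Let `n ≥ 5` and `y ∈ Hₙ` (indexed by `Fin n`; in 1-based notation
`y_j = y ⟨j-1,_⟩`) with `y_{j+1} - y_j ≥ 1` for `j = 1,…,n-2` and `y_{n-1} = y_n`.
Then `|y|₁ ≥ (n-3)/5`. -/
theorem stmt_14 (n : ℕ) (hn : 5 ≤ n) (y : Fin n → ℝ)
    (hy : ∑ j, y j = 0)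
    (hstep : ∀ j : ℕ, (hj : j + 3 ≤ n) → 1 ≤ y ⟨j + 1, by omega⟩ - y ⟨j, by omega⟩)
    (hlast : y ⟨n - 2, by omega⟩ = y ⟨n - 1, by omega⟩) :
    ((n : ℝ) - 3) / 5 ≤ (1 / (n : ℝ)) * ∑ j, |y j| := by
  classical
  set z : ℕ → ℝ := fun j => if h : j < n then y ⟨j, h⟩ else 0 with hzdef
  have hz' : ∀ j (h : j < n), z j = y ⟨j, h⟩ := fun j h => dif_pos h
  have hstep' : ∀ j : ℕ, j + 3 ≤ n → 1 ≤ z (j + 1) - z j := by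
    intro j hj
    rw [hz' j (by omega), hz' (j + 1) (by omega)]
    exact hstep j hj
  have chain : ∀ d i : ℕ, i + d ≤ n - 2 → (d : ℝ) ≤ z (i + d) - z i := by
    intro d
    induction d with
    | zero => intro i h; simp
    | succ d ih =>
      intro i h
      have h2 := ih i (by omega)
      have h3 := hstep' (i + d) (by omega)
      have he : i + (d + 1) = (i + d) + 1 := by ring
      rw [he]
      push_cast
      linarith
  set m : ℕ := n - 2 with hmdef
  set k : ℕ := (n - 1) / 2 with hkdef
  have hk2 : 2 ≤ k := by omega
  have hk1 : 2 * k ≤ n - 1 := by omega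
  have hk2' : n - 1 ≤ 2 * k + 1 := by omega
  -- the total sum in terms of z
  have hsum : ∑ j, |y j| = ∑ j ∈ Finset.range n, |z j| := by
    rw [Finset.sum_range (fun j => |z j|)]
    apply Finset.sum_congr rfl
    intro i _
    rw [hz' i.1 i.2]
  -- pairing bound
  have key : ∀ j ∈ Finset.range k, ((m : ℝ) - 2 * j) ≤ |z j| + |z (m - j)| := by
    intro j hj
    rw [Finset.mem_range] at hj
    have h2j : 2 * j ≤ m := by omega
    have hc := chain (m - 2 * j) j (by omega)
    have hidx : j + (m - 2 * j) = m - j := by omega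
    rw [hidx] at hc
    have hcast : ((m - 2 * j : ℕ) : ℝ) = (m : ℝ) - 2 * (j : ℝ) := by
      push_cast [h2j]; ring
    rw [hcast] at hc
    have h1 := le_abs_self (z (m - j))
    have h2 := neg_abs_le (z j)
    linarith
  -- reindex sum over B
  have himg : Finset.Ico (m + 1 - k) (m + 1) = (Finset.range k).image (fun j => m - j) := by
    ext x
    simp only [Finset.mem_Ico, Finset.mem_image, Finset.mem_range]
    constructor
    · rintro ⟨h1, h2⟩; exact ⟨m - x, by omega, by omega⟩
    · rintro ⟨j, hj, rfl⟩; omega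
  have hBsum : ∑ j ∈ Finset.Ico (m + 1 - k) (m + 1), |z j|
      = ∑ j ∈ Finset.range k, |z (m - j)| := by
    rw [himg]
    apply Finset.sum_image
    intro a ha b hb hab
    rw [Finset.mem_coe, Finset.mem_range] at ha hb
    beta_reduce at hab
    omega
  have hdisj : Disjoint (Finset.range k) (Finset.Ico (m + 1 - k) (m + 1)) := by
    rw [Finset.disjoint_left]
    intro a ha hb
    rw [Finset.mem_range] at ha
    rw [Finset.mem_Ico] at hb
    omega
  have hsubset : Finset.range k ∪ Finset.Ico (m + 1 - k) (m + 1) ⊆ Finset.range n := by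
    intro a ha
    rw [Finset.mem_union, Finset.mem_range, Finset.mem_Ico] at ha
    rw [Finset.mem_range]
    omega
  have hstep1 : ∑ j ∈ Finset.range k, (|z j| + |z (m - j)|) ≤ ∑ j ∈ Finset.range n, |z j| := by
    rw [Finset.sum_add_distrib, ← hBsum, ← Finset.sum_union hdisj]
    exact Finset.sum_le_sum_of_subset_of_nonneg hsubset (fun i _ _ => abs_nonneg _)
  have hstep2 : (k : ℝ) * m - (k : ℝ) * ((k : ℝ) - 1) ≤ ∑ j ∈ Finset.range k, (|z j| + |z (m - j)|) := by
    have h1 : ∑ j ∈ Finset.range k, ((m : ℝ) - 2 * j) ≤ ∑ j ∈ Finset.range k, (|z j| + |z (m - j)|) :=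
      Finset.sum_le_sum key
    have h2 : ∑ j ∈ Finset.range k, ((m : ℝ) - 2 * j) = (k : ℝ) * m - (k : ℝ) * ((k : ℝ) - 1) := by
      rw [Finset.sum_sub_distrib, Finset.sum_const, ← Finset.mul_sum]
      have h3 : (∑ j ∈ Finset.range k, (j : ℝ)) = (k : ℝ) * ((k : ℝ) - 1) / 2 := by
        have := Finset.sum_range_id_mul_two k
        have h4 : ((∑ j ∈ Finset.range k, j : ℕ) : ℝ) * 2 = (k : ℝ) * ((k : ℝ) - 1) := by
          rw [← Nat.cast_ofNat, ← Nat.cast_mul, this]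
          push_cast [show 1 ≤ k by omega]
          ring
        push_cast at h4 ⊢
        linarith
      rw [h3]
      simp
      ring
    linarith [h1, h2]
  -- finish
  have hn0 : (0 : ℝ) < n := by positivity
  have hmcast : (m : ℝ) = (n : ℝ) - 2 := by
    have h2 : m + 2 = n := by omega
    have h3 := congrArg (Nat.cast : ℕ → ℝ) h2
    push_cast at h3
    linarith
  have hkcastlb : 2 * (k : ℝ) + 1 ≤ (n : ℝ) := by
    have : 2 * k + 1 ≤ n := by omega
    exact_mod_cast this
  have hkcastub : (n : ℝ) ≤ 2 * (k : ℝ) + 2 := by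
    have : n ≤ 2 * k + 2 := by omega
    exact_mod_cast this
  rw [hsum, one_div, inv_mul_eq_div, div_le_div_iff₀ (by norm_num) hn0]
  have hS : (k : ℝ) * ((n : ℝ) - 2) - (k : ℝ) * ((k : ℝ) - 1) ≤ ∑ j ∈ Finset.range n, |z j| := by
    rw [← hmcast]; linarith
  nlinarith [mul_nonneg (by linarith : (0:ℝ) ≤ (n : ℝ) - (2 * k + 1)) (by linarith : (0:ℝ) ≤ 2 * (k:ℝ) + 2 - n), hS]
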